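/- Let G be an intransitive permutation group on an n-element set Ω with the k-et property, where 2 < k < n. Then G fixes a point of Ω and acts (k-1)-homogeneously on the remaining n-1 points. -/

import Mathlib

open Finset

variable {Ω : Type*} [Fintype Ω] [DecidableEq Ω]

/-- `P` is a partition of the finite set `Ω`. -/
def IsPartition (P : Finset (Finset Ω)) : Prop :=
  (∀ p ∈ P, p.Nonempty) ∧
  (∀ p ∈ P, ∀ q ∈ P, p ≠ q → Disjoint p q) ∧
  (∀ x : Ω, ∃ p ∈ P, x ∈ p)

/-- `S` is a transversal of the partition `P`. -/
def IsTransversal (S : Finset Ω) (P : Finset (Finset Ω)) : Prop :=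
  ∀ p ∈ P, (S ∩ p).card = 1

/-- The `k`-set `S` witnesses the `k`-existential transversal property for `G`. -/
def Witnesses (G : Subgroup (Equiv.Perm Ω)) (k : ℕ) (S : Finset Ω) : Prop :=
  S.card = k ∧ ∀ P : Finset (Finset Ω), IsPartition P → P.card = k →
    ∃ g ∈ G, IsTransversal (S.image ⇑g) P

/-! ### Auxiliary lemmas -/

lemma mem_of_transversal {T : Finset Ω} {P : Finset (Finset Ω)} (hT : IsTransversal T P)
    {x : Ω} (hx : {x} ∈ P) : x ∈ T := by
  have h := hT _ hx
  obtain ⟨y, hy⟩ := Finset.card_eq_one.mp h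
  have hyin : y ∈ T ∩ {x} := hy ▸ Finset.mem_singleton_self y
  obtain ⟨h1, h2⟩ := Finset.mem_inter.mp hyin
  rwa [Finset.mem_singleton.mp h2] at h1

lemma sdiff_not_mem_image (D : Finset Ω) :
    univ \ D ∉ D.image (fun d => ({d} : Finset Ω)) := by
  intro h
  obtain ⟨d, hd, hEq⟩ := Finset.mem_image.mp h
  have : d ∈ univ \ D := hEq ▸ Finset.mem_singleton_self d
  exact (Finset.mem_sdiff.mp this).2 hd

/-- The partition consisting of singletons of `D` and the complement of `D`. -/
lemma singPart_isPartition {D : Finset Ω} (hD : D ≠ univ) :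
    IsPartition (insert (univ \ D) (D.image (fun d => ({d} : Finset Ω)))) := by
  have hne : (univ \ D).Nonempty := by
    rw [Finset.sdiff_nonempty]
    intro h
    exact hD (Finset.univ_subset_iff.mp h)
  refine ⟨?_, ?_, ?_⟩
  · intro p hp
    rcases Finset.mem_insert.mp hp with h | h
    · exact h ▸ hne
    · obtain ⟨d, _, hEq⟩ := Finset.mem_image.mp h
      exact hEq ▸ ⟨d, Finset.mem_singleton_self d⟩
  · intro p hp q hq hpq
    rcases Finset.mem_insert.mp hp with h1 | h1 <;> rcases Finset.mem_insert.mp hq with h2 | h2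
    · exact absurd (h1.trans h2.symm) hpq
    · obtain ⟨d, hd, hEq⟩ := Finset.mem_image.mp h2
      subst h1; subst hEq
      rw [Finset.disjoint_singleton_right, Finset.mem_sdiff]
      exact fun h => h.2 hd
    · obtain ⟨d, hd, hEq⟩ := Finset.mem_image.mp h1
      subst h2; subst hEq
      rw [Finset.disjoint_singleton_left, Finset.mem_sdiff]
      exact fun h => h.2 hd
    · obtain ⟨d, hd, hEq⟩ := Finset.mem_image.mp h1
      obtain ⟨e, he, hEq2⟩ := Finset.mem_image.mp h2
      subst hEq; subst hEq2
      rw [Finset.disjoint_singleton_right, Finset.mem_singleton]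
      intro h; exact hpq (by rw [h])
  · intro x
    by_cases hx : x ∈ D
    · exact ⟨{x}, Finset.mem_insert_of_mem (Finset.mem_image_of_mem _ hx),
        Finset.mem_singleton_self x⟩
    · exact ⟨univ \ D, Finset.mem_insert_self _ _,
        Finset.mem_sdiff.mpr ⟨Finset.mem_univ x, hx⟩⟩

lemma singPart_card (D : Finset Ω) :
    (insert (univ \ D) (D.image (fun d => ({d} : Finset Ω)))).card = D.card + 1 := by
  rw [Finset.card_insert_of_notMem (sdiff_not_mem_image D),
    Finset.card_image_of_injective _ (fun a b h => by
      simpa using congrArg (fun s : Finset Ω => a ∈ s) h)]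

lemma transversal_contains (G : Subgroup (Equiv.Perm Ω)) {k : ℕ} {S : Finset Ω}
    (hS : Witnesses G k S) {D : Finset Ω} (hD : D.card + 1 = k) (hDu : D ≠ univ) :
    ∃ g ∈ G, D ⊆ S.image ⇑g := by
  obtain ⟨g, hg, htr⟩ := hS.2 _ (singPart_isPartition hDu) (by rw [singPart_card]; omega)
  exact ⟨g, hg, fun d hd =>
    mem_of_transversal htr (Finset.mem_insert_of_mem (Finset.mem_image_of_mem _ hd))⟩

lemma transversal_card_filter {P : Finset (Finset Ω)} {T U : Finset Ω}
    (hP : IsPartition P) (hT : IsTransversal T P)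
    (hsplit : ∀ p ∈ P, p ⊆ U ∨ Disjoint p U) :
    (T ∩ U).card = (P.filter (· ⊆ U)).card := by
  have key : T ∩ U = (P.filter (· ⊆ U)).biUnion (fun p => T ∩ p) := by
    ext x
    simp only [Finset.mem_inter, Finset.mem_biUnion, Finset.mem_filter]
    constructor
    · rintro ⟨hxT, hxU⟩
      obtain ⟨p, hpP, hxp⟩ := hP.2.2 x
      rcases hsplit p hpP with h | h
      · exact ⟨p, ⟨hpP, h⟩, hxT, hxp⟩
      · exact absurd hxU (Finset.disjoint_left.mp h hxp)
    · rintro ⟨p, ⟨_, hpU⟩, hxT, hxp⟩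
      exact ⟨hxT, hpU hxp⟩
  rw [key, Finset.card_biUnion]
  · rw [Finset.sum_congr rfl (fun p hp => hT p (Finset.mem_filter.mp hp).1)]
    simp
  · intro p hp q hq hpq
    exact Finset.disjoint_of_subset_left Finset.inter_subset_right
      (Finset.disjoint_of_subset_right Finset.inter_subset_right
        (hP.2.1 _ (Finset.mem_filter.mp hp).1 _ (Finset.mem_filter.mp hq).1 hpq))

lemma card_inter_eq (G : Subgroup (Equiv.Perm Ω)) {k : ℕ} {S : Finset Ω}
    (hS : Witnesses G k S)
    {U : Finset Ω} (hinv : ∀ g ∈ G, ∀ x ∈ U, g x ∈ U)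
    {p : ℕ} (hp1 : 1 ≤ p) (hpu : p ≤ U.card)
    (hq1 : 1 ≤ k - p) (hqv : k - p ≤ (univ \ U).card) (hpk : p ≤ k) :
    (S ∩ U).card = p := by
  set V := univ \ U with hV
  obtain ⟨C₁, hC₁U, hC₁card⟩ := Finset.exists_subset_card_eq (s := U) (n := p - 1) (by omega)
  obtain ⟨C₂, hC₂V, hC₂card⟩ := Finset.exists_subset_card_eq (s := V) (n := k - p - 1) (by omega)
  -- blocks in U
  set B₁ : Finset (Finset Ω) := insert (U \ C₁) (C₁.image (fun d => ({d} : Finset Ω))) with hB₁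
  set B₂ : Finset (Finset Ω) := insert (V \ C₂) (C₂.image (fun d => ({d} : Finset Ω))) with hB₂
  have hUC₁ : (U \ C₁).Nonempty := by
    rw [← Finset.card_pos, Finset.card_sdiff_of_subset hC₁U]; omega
  have hVC₂ : (V \ C₂).Nonempty := by
    rw [← Finset.card_pos, Finset.card_sdiff_of_subset hC₂V]; omega
  have hB₁sub : ∀ q ∈ B₁, q ⊆ U := by
    intro q hq
    rcases Finset.mem_insert.mp hq with h | h
    · exact h ▸ Finset.sdiff_subset
    · obtain ⟨d, hd, hEq⟩ := Finset.mem_image.mp h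
      exact hEq ▸ Finset.singleton_subset_iff.mpr (hC₁U hd)
  have hB₂sub : ∀ q ∈ B₂, q ⊆ V := by
    intro q hq
    rcases Finset.mem_insert.mp hq with h | h
    · exact h ▸ Finset.sdiff_subset
    · obtain ⟨d, hd, hEq⟩ := Finset.mem_image.mp h
      exact hEq ▸ Finset.singleton_subset_iff.mpr (hC₂V hd)
  have hB₁ne : ∀ q ∈ B₁, q.Nonempty := by
    intro q hq
    rcases Finset.mem_insert.mp hq with h | h
    · exact h ▸ hUC₁
    · obtain ⟨d, _, hEq⟩ := Finset.mem_image.mp h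
      exact hEq ▸ ⟨d, Finset.mem_singleton_self d⟩
  have hB₂ne : ∀ q ∈ B₂, q.Nonempty := by
    intro q hq
    rcases Finset.mem_insert.mp hq with h | h
    · exact h ▸ hVC₂
    · obtain ⟨d, _, hEq⟩ := Finset.mem_image.mp h
      exact hEq ▸ ⟨d, Finset.mem_singleton_self d⟩
  have hUV : Disjoint U V := by
    rw [hV]; exact Finset.disjoint_sdiff
  -- generic: blocks of X with C ⊊ X are pairwise disjoint
  have blocks_disj : ∀ (X C : Finset Ω),
      ∀ q1 ∈ insert (X \ C) (C.image (fun d => ({d} : Finset Ω))),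
      ∀ q2 ∈ insert (X \ C) (C.image (fun d => ({d} : Finset Ω))),
      q1 ≠ q2 → Disjoint q1 q2 := by
    intro X C q1 hq1 q2 hq2 hne
    rcases Finset.mem_insert.mp hq1 with h1 | h1 <;> rcases Finset.mem_insert.mp hq2 with h2 | h2
    · exact absurd (h1.trans h2.symm) hne
    · obtain ⟨d, hd, hEq⟩ := Finset.mem_image.mp h2
      subst h1; subst hEq
      rw [Finset.disjoint_singleton_right, Finset.mem_sdiff]
      exact fun h => h.2 hd
    · obtain ⟨d, hd, hEq⟩ := Finset.mem_image.mp h1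
      subst h2; subst hEq
      rw [Finset.disjoint_singleton_left, Finset.mem_sdiff]
      exact fun h => h.2 hd
    · obtain ⟨d, hd, hEq⟩ := Finset.mem_image.mp h1
      obtain ⟨e, he, hEq2⟩ := Finset.mem_image.mp h2
      subst hEq; subst hEq2
      rw [Finset.disjoint_singleton_right, Finset.mem_singleton]
      intro h; exact hne (by rw [h])
  have blocks_card : ∀ (X C : Finset Ω), (X \ C).Nonempty →
      (insert (X \ C) (C.image (fun d => ({d} : Finset Ω)))).card = C.card + 1 := by
    intro X C hXC
    have hnm : X \ C ∉ C.image (fun d => ({d} : Finset Ω)) := by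
      intro h
      obtain ⟨d, hd, hEq⟩ := Finset.mem_image.mp h
      have : d ∈ X \ C := hEq ▸ Finset.mem_singleton_self d
      exact (Finset.mem_sdiff.mp this).2 hd
    rw [Finset.card_insert_of_notMem hnm,
      Finset.card_image_of_injective _ (fun a b h => by
        simpa using congrArg (fun s : Finset Ω => a ∈ s) h)]
  have hdisjB : Disjoint B₁ B₂ := by
    rw [Finset.disjoint_left]
    intro q hq1 hq2
    obtain ⟨x, hx⟩ := hB₁ne q hq1
    exact Finset.disjoint_left.mp hUV (hB₁sub q hq1 hx) (hB₂sub q hq2 hx)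
  set P := B₁ ∪ B₂ with hPdef
  have hPart : IsPartition P := by
    refine ⟨?_, ?_, ?_⟩
    · intro q hq
      rcases Finset.mem_union.mp hq with h | h
      · exact hB₁ne q h
      · exact hB₂ne q h
    · intro q1 hq1 q2 hq2 hne
      rcases Finset.mem_union.mp hq1 with h1 | h1 <;> rcases Finset.mem_union.mp hq2 with h2 | h2
      · exact blocks_disj U C₁ _ h1 _ h2 hne
      · exact Finset.disjoint_of_subset_left (hB₁sub _ h1)
          (Finset.disjoint_of_subset_right (hB₂sub _ h2) hUV)
      · exact Finset.disjoint_of_subset_left (hB₂sub _ h1)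
          (Finset.disjoint_of_subset_right (hB₁sub _ h2) hUV.symm)
      · exact blocks_disj V C₂ _ h1 _ h2 hne
    · intro x
      by_cases hx : x ∈ U
      · by_cases hxc : x ∈ C₁
        · exact ⟨{x}, Finset.mem_union_left _
            (Finset.mem_insert_of_mem (Finset.mem_image_of_mem _ hxc)),
            Finset.mem_singleton_self x⟩
        · exact ⟨U \ C₁, Finset.mem_union_left _ (Finset.mem_insert_self _ _),
            Finset.mem_sdiff.mpr ⟨hx, hxc⟩⟩
      · have hxV : x ∈ V := Finset.mem_sdiff.mpr ⟨Finset.mem_univ x, hx⟩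
        by_cases hxc : x ∈ C₂
        · exact ⟨{x}, Finset.mem_union_right _
            (Finset.mem_insert_of_mem (Finset.mem_image_of_mem _ hxc)),
            Finset.mem_singleton_self x⟩
        · exact ⟨V \ C₂, Finset.mem_union_right _ (Finset.mem_insert_self _ _),
            Finset.mem_sdiff.mpr ⟨hxV, hxc⟩⟩
  have hPcard : P.card = k := by
    rw [hPdef, Finset.card_union_of_disjoint hdisjB, blocks_card U C₁ hUC₁,
      blocks_card V C₂ hVC₂, hC₁card, hC₂card]
    omega
  obtain ⟨g, hg, htr⟩ := hS.2 P hPart hPcard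
  have hsplit : ∀ q ∈ P, q ⊆ U ∨ Disjoint q U := by
    intro q hq
    rcases Finset.mem_union.mp hq with h | h
    · exact Or.inl (hB₁sub q h)
    · exact Or.inr (Finset.disjoint_of_subset_left (hB₂sub q h) hUV.symm)
  have hfilter : P.filter (· ⊆ U) = B₁ := by
    ext q
    simp only [Finset.mem_filter, hPdef, Finset.mem_union]
    constructor
    · rintro ⟨h | h, hsub⟩
      · exact h
      · obtain ⟨x, hx⟩ := hB₂ne q h
        exact absurd (hsub hx) (Finset.disjoint_left.mp hUV.symm (hB₂sub q h hx))
    · intro h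
      exact ⟨Or.inl h, hB₁sub q h⟩
  have hcount : ((S.image ⇑g) ∩ U).card = p := by
    rw [transversal_card_filter hPart htr hsplit, hfilter, hB₁, blocks_card U C₁ hUC₁,
      hC₁card]
    omega
  -- invariance: (S.image g) ∩ U = (S ∩ U).image g
  have himg : (S.image ⇑g) ∩ U = (S ∩ U).image ⇑g := by
    ext x
    simp only [Finset.mem_inter, Finset.mem_image]
    constructor
    · rintro ⟨⟨s, hs, rfl⟩, hxU⟩
      refine ⟨s, ⟨hs, ?_⟩, rfl⟩
      have := hinv g⁻¹ (inv_mem hg) _ hxU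
      simpa using this
    · rintro ⟨s, ⟨hs, hsU⟩, rfl⟩
      exact ⟨⟨s, hs, rfl⟩, hinv g hg s hsU⟩
  rw [himg, Finset.card_image_of_injective _ g.injective] at hcount
  exact hcount

lemma invariant_small (G : Subgroup (Equiv.Perm Ω)) {k : ℕ} {S : Finset Ω}
    (hS : Witnesses G k S) (hk2 : 2 < k) (hkn : k < Fintype.card Ω)
    {U : Finset Ω} (hinv : ∀ g ∈ G, ∀ x ∈ U, g x ∈ U)
    (hU2 : 2 ≤ U.card) (hV2 : 2 ≤ (univ \ U).card) : False := by
  have hcardV : (univ \ U).card = Fintype.card Ω - U.card := by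
    rw [Finset.card_sdiff_of_subset (Finset.subset_univ _), Finset.card_univ]
  have hUn : U.card ≤ Fintype.card Ω := by
    rw [← Finset.card_univ]; exact Finset.card_le_card (Finset.subset_univ U)
  set v := (univ \ U).card with hv
  set p := if k ≤ v then 1 else k - v with hp
  have h1 : (S ∩ U).card = p :=
    card_inter_eq G hS hinv
      (by rw [hp]; split_ifs <;> omega)
      (by rw [hp]; split_ifs <;> omega)
      (by rw [hp]; split_ifs <;> omega)
      (by rw [hp]; split_ifs <;> omega)
      (by rw [hp]; split_ifs <;> omega)
  have h2 : (S ∩ U).card = p + 1 :=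
    card_inter_eq G hS hinv
      (by rw [hp]; split_ifs <;> omega)
      (by rw [hp]; split_ifs <;> omega)
      (by rw [hp]; split_ifs <;> omega)
      (by rw [hp]; split_ifs <;> omega)
      (by rw [hp]; split_ifs <;> omega)
  omega

/-- An intransitive group with the `k`-et property, `2 < k < n`, fixes a point and
acts `(k-1)`-homogeneously on the remaining points. -/
theorem intransitive_kET (G : Subgroup (Equiv.Perm Ω)) (k : ℕ)
    (hintrans : ∃ a b : Ω, ∀ g ∈ G, g a ≠ b)
    (hk2 : 2 < k) (hkn : k < Fintype.card Ω)
    (het : ∃ S : Finset Ω, Witnesses G k S) :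
    ∃ a : Ω, (∀ g ∈ G, g a = a) ∧
      ∀ A B : Finset Ω, a ∉ A → a ∉ B → A.card = k - 1 → B.card = k - 1 →
        ∃ g ∈ G, A.image ⇑g = B := by
  classical
  obtain ⟨S, hS⟩ := het
  obtain ⟨a₀, b₀, hab⟩ := hintrans
  set O : Finset Ω := univ.filter (fun x => ∃ g ∈ G, g a₀ = x) with hO
  have ha₀O : a₀ ∈ O := by
    rw [hO, Finset.mem_filter]
    exact ⟨Finset.mem_univ _, 1, one_mem G, rfl⟩
  have hb₀O : b₀ ∉ O := by
    rw [hO, Finset.mem_filter]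
    rintro ⟨-, g, hg, hga⟩
    exact hab g hg hga
  have hOinv : ∀ g ∈ G, ∀ x ∈ O, g x ∈ O := by
    intro g hg x hx
    rw [hO, Finset.mem_filter] at hx ⊢
    obtain ⟨-, h, hh, hha⟩ := hx
    exact ⟨Finset.mem_univ _, g * h, mul_mem hg hh, by
      rw [Equiv.Perm.mul_apply, hha]⟩
  have hb₀V : b₀ ∈ univ \ O := Finset.mem_sdiff.mpr ⟨Finset.mem_univ _, hb₀O⟩
  have key : O.card = 1 ∨ (univ \ O).card = 1 := by
    by_contra h
    push_neg at h
    have h1 : 1 ≤ O.card := Finset.card_pos.mpr ⟨a₀, ha₀O⟩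
    have h2 : 1 ≤ (univ \ O).card := Finset.card_pos.mpr ⟨b₀, hb₀V⟩
    exact invariant_small G hS hk2 hkn hOinv (by omega) (by omega)
  -- obtain the fixed point
  obtain ⟨a, hfix⟩ : ∃ a : Ω, ∀ g ∈ G, g a = a := by
    rcases key with h | h
    · obtain ⟨x, hx⟩ := Finset.card_eq_one.mp h
      have hxa : a₀ = x := Finset.mem_singleton.mp (hx ▸ ha₀O)
      refine ⟨a₀, fun g hg => ?_⟩
      have := hOinv g hg a₀ ha₀O
      rw [hx, Finset.mem_singleton] at this
      rw [this, hxa]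
    · obtain ⟨c, hc⟩ := Finset.card_eq_one.mp h
      refine ⟨c, fun g hg => ?_⟩
      have hcO : c ∉ O := by
        have : c ∈ univ \ O := hc ▸ Finset.mem_singleton_self c
        exact (Finset.mem_sdiff.mp this).2
      have hgcO : g c ∉ O := by
        intro hmem
        have h2 := hOinv g⁻¹ (inv_mem hg) _ hmem
        simp only [Equiv.Perm.inv_def, Equiv.symm_apply_apply] at h2
        exact hcO h2
      have : g c ∈ univ \ O := Finset.mem_sdiff.mpr ⟨Finset.mem_univ _, hgcO⟩
      rw [hc, Finset.mem_singleton] at this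
      exact this
  have hn : 2 < Fintype.card Ω := lt_trans hk2 hkn
  -- a ∈ S
  have haS : a ∈ S := by
    obtain ⟨C, hCsub, hCcard⟩ := Finset.exists_subset_card_eq (s := univ.erase a) (n := k - 2)
      (by rw [Finset.card_erase_of_mem (Finset.mem_univ a), Finset.card_univ]; omega)
    have haC : a ∉ C := fun h => (Finset.mem_erase.mp (hCsub h)).1 rfl
    set D := insert a C with hD
    have hDcard : D.card = k - 1 := by
      rw [hD, Finset.card_insert_of_notMem haC, hCcard]; omega
    have hDu : D ≠ univ := by
      intro h
      rw [h, Finset.card_univ] at hDcard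
      omega
    obtain ⟨g, hg, hsub⟩ := transversal_contains G hS (by omega) hDu
    have : a ∈ S.image ⇑g := hsub (Finset.mem_insert_self a C)
    obtain ⟨s, hs, hgs⟩ := Finset.mem_image.mp this
    have : s = a := g.injective (hgs.trans (hfix g hg).symm)
    exact this ▸ hs
  -- key image lemma
  have himg : ∀ B : Finset Ω, a ∉ B → B.card = k - 1 →
      ∃ g ∈ G, S.image ⇑g = insert a B := by
    intro B haB hBcard
    have hBu : B ≠ univ := by
      intro h
      rw [h, Finset.card_univ] at hBcard
      omega
    obtain ⟨g, hg, hsub⟩ := transversal_contains G hS (by omega) hBu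
    refine ⟨g, hg, ?_⟩
    have haimg : a ∈ S.image ⇑g := by
      have := Finset.mem_image_of_mem ⇑g haS
      rwa [hfix g hg] at this
    have hsubset : insert a B ⊆ S.image ⇑g := Finset.insert_subset haimg hsub
    have hcards : (S.image ⇑g).card ≤ (insert a B).card := by
      rw [Finset.card_image_of_injective _ g.injective, hS.1,
        Finset.card_insert_of_notMem haB, hBcard]
      omega
    exact (Finset.eq_of_subset_of_card_le hsubset hcards).symm
  refine ⟨a, hfix, ?_⟩
  intro A B haA haB hA hB
  obtain ⟨gA, hgA, hAimg⟩ := himg A haA hA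
  obtain ⟨gB, hgB, hBimg⟩ := himg B haB hB
  have hgmem : gB * gA⁻¹ ∈ G := mul_mem hgB (inv_mem hgA)
  refine ⟨gB * gA⁻¹, hgmem, ?_⟩
  have h1 : (insert a A).image ⇑(gA⁻¹ : Equiv.Perm Ω) = S := by
    rw [← hAimg, Finset.image_image]
    have : (⇑(gA⁻¹ : Equiv.Perm Ω) ∘ ⇑gA) = id := by
      funext x
      simp
    rw [this, Finset.image_id]
  have h2 : (insert a A).image ⇑(gB * gA⁻¹) = insert a B := by
    have hco : (⇑(gB * gA⁻¹) : Ω → Ω) = ⇑gB ∘ ⇑(gA⁻¹ : Equiv.Perm Ω) := by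
      funext x
      simp [Equiv.Perm.mul_apply]
    rw [hco, ← Finset.image_image, h1, hBimg]
  have hga : (gB * gA⁻¹) a = a := hfix _ hgmem
  rw [Finset.image_insert, hga] at h2
  have hanotimg : a ∉ A.image ⇑(gB * gA⁻¹) := by
    intro h
    obtain ⟨x, hx, hgx⟩ := Finset.mem_image.mp h
    have : x = a := (gB * gA⁻¹).injective (hgx.trans hga.symm)
    exact haA (this ▸ hx)
  calc A.image ⇑(gB * gA⁻¹)
      = (insert a (A.image ⇑(gB * gA⁻¹))).erase a := (Finset.erase_insert hanotimg).symm
    _ = (insert a B).erase a := by rw [h2]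
    _ = B := Finset.erase_insert haB
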